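/- Let g : ℍ → ℝ (regarded as the real-valued quaternion function q ↦ (g(q) : ℍ)) be real-(Fréchet-)differentiable at q ∈ ℍ, let f : ℝ → ℝ be differentiable at g(q), and let μ ∈ ℍ be nonzero. Then the composite q ↦ (f(g(q)) : ℍ) satisfies ∂(f∘g)/∂q^μ(q) = f'(g(q)) · ∂g/∂q^μ(q) and ∂(f∘g)/∂q^{μ*}(q) = f'(g(q)) · ∂g/∂q^{μ*}(q). -/

import Mathlib

open Quaternion Filter Topology Asymptotics

noncomputable section

/-- The imaginary unit `i` of the real quaternions. -/
def qI : ℍ[ℝ] := ⟨0, 1, 0, 0⟩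
/-- The imaginary unit `j` of the real quaternions. -/
def qJ : ℍ[ℝ] := ⟨0, 0, 1, 0⟩
/-- The imaginary unit `k` of the real quaternions. -/
def qK : ℍ[ℝ] := ⟨0, 0, 0, 1⟩

/-- Quaternion rotation `p ↦ μ p μ⁻¹`. -/
def qRot (μ p : ℍ[ℝ]) : ℍ[ℝ] := μ * p * μ⁻¹

/-- The left GHR derivative `∂f/∂q^μ` at `q`. -/
def lD (f : ℍ[ℝ] → ℍ[ℝ]) (μ q : ℍ[ℝ]) : ℍ[ℝ] :=
  (4 : ℍ[ℝ])⁻¹ * (fderiv ℝ f q 1 - fderiv ℝ f q qI * qRot μ qI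
    - fderiv ℝ f q qJ * qRot μ qJ - fderiv ℝ f q qK * qRot μ qK)

/-- The left conjugate GHR derivative `∂f/∂q^{μ*}` at `q`. -/
def lDc (f : ℍ[ℝ] → ℍ[ℝ]) (μ q : ℍ[ℝ]) : ℍ[ℝ] :=
  (4 : ℍ[ℝ])⁻¹ * (fderiv ℝ f q 1 + fderiv ℝ f q qI * qRot μ qI
    + fderiv ℝ f q qJ * qRot μ qJ + fderiv ℝ f q qK * qRot μ qK)

/-- The right GHR derivative `∂ᵣf/∂q^μ` at `q`. -/
def rD (f : ℍ[ℝ] → ℍ[ℝ]) (μ q : ℍ[ℝ]) : ℍ[ℝ] :=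
  (4 : ℍ[ℝ])⁻¹ * (fderiv ℝ f q 1 - qRot μ qI * fderiv ℝ f q qI
    - qRot μ qJ * fderiv ℝ f q qJ - qRot μ qK * fderiv ℝ f q qK)

/-- The right conjugate GHR derivative `∂ᵣf/∂q^{μ*}` at `q`. -/
def rDc (f : ℍ[ℝ] → ℍ[ℝ]) (μ q : ℍ[ℝ]) : ℍ[ℝ] :=
  (4 : ℍ[ℝ])⁻¹ * (fderiv ℝ f q 1 + qRot μ qI * fderiv ℝ f q qI
    + qRot μ qJ * fderiv ℝ f q qJ + qRot μ qK * fderiv ℝ f q qK)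


def coeCLM : ℝ →L[ℝ] ℍ[ℝ] :=
  LinearMap.toContinuousLinearMap (Algebra.linearMap ℝ ℍ[ℝ])

def reCLM : ℍ[ℝ] →L[ℝ] ℝ :=
  LinearMap.toContinuousLinearMap (QuaternionAlgebra.reₗ (-1 : ℝ) 0 (-1))

lemma key_chain (g : ℍ[ℝ] → ℝ) (f : ℝ → ℝ) (q : ℍ[ℝ])
    (hg : DifferentiableAt ℝ (fun p => ((g p : ℝ) : ℍ[ℝ])) q)
    (hf : DifferentiableAt ℝ f (g q)) (v : ℍ[ℝ]) :
    fderiv ℝ (fun p => ((f (g p) : ℝ) : ℍ[ℝ])) q v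
      = ((deriv f (g q) : ℝ) : ℍ[ℝ]) * fderiv ℝ (fun p => ((g p : ℝ) : ℍ[ℝ])) q v := by
  have hgd : DifferentiableAt ℝ g q := by
    have h : g = (fun a : ℍ[ℝ] => reCLM a) ∘ (fun p => ((g p : ℝ) : ℍ[ℝ])) := by
      funext p; show g p = ((g p : ℝ) : ℍ[ℝ]).re; simp
    rw [h]
    exact (reCLM.differentiableAt).comp q hg
  have hG : HasFDerivAt (fun p => ((g p : ℝ) : ℍ[ℝ])) (coeCLM.comp (fderiv ℝ g q)) q :=
    coeCLM.hasFDerivAt.comp q hgd.hasFDerivAt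
  have hF : HasFDerivAt (fun p => ((f (g p) : ℝ) : ℍ[ℝ]))
      (coeCLM.comp ((deriv f (g q)) • (fderiv ℝ g q))) q := by
    have h1 : HasDerivAt f (deriv f (g q)) (g q) := hf.hasDerivAt
    have h2 : HasFDerivAt (fun p => f (g p))
        ((deriv f (g q)) • (fderiv ℝ g q)) q := by
      have h3 := h1.hasFDerivAt.comp q hgd.hasFDerivAt
      refine h3.congr_fderiv ?_
      ext w
      simp [mul_comm]
    exact coeCLM.hasFDerivAt.comp q h2
  rw [hF.fderiv, hG.fderiv]
  simp [coeCLM, Quaternion.coe_mul, Quaternion.smul_coe]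

theorem left_GHR_chain_rule_real_composition
    (g : ℍ[ℝ] → ℝ) (f : ℝ → ℝ) (q μ : ℍ[ℝ])
    (hg : DifferentiableAt ℝ (fun p => ((g p : ℝ) : ℍ[ℝ])) q)
    (hf : DifferentiableAt ℝ f (g q)) (hμ : μ ≠ 0) :
    lD (fun p => ((f (g p) : ℝ) : ℍ[ℝ])) μ q
      = ((deriv f (g q) : ℝ) : ℍ[ℝ]) * lD (fun p => ((g p : ℝ) : ℍ[ℝ])) μ q ∧
    lDc (fun p => ((f (g p) : ℝ) : ℍ[ℝ])) μ q
      = ((deriv f (g q) : ℝ) : ℍ[ℝ]) * lDc (fun p => ((g p : ℝ) : ℍ[ℝ])) μ q := by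
  set c : ℍ[ℝ] := ((deriv f (g q) : ℝ) : ℍ[ℝ]) with hc
  have k1 := key_chain g f q hg hf 1
  have ki := key_chain g f q hg hf qI
  have kj := key_chain g f q hg hf qJ
  have kk := key_chain g f q hg hf qK
  have factor : ∀ s : ℍ[ℝ],
      (4 : ℍ[ℝ])⁻¹ * (c * s) = c * ((4 : ℍ[ℝ])⁻¹ * s) := by
    intro s
    rw [← mul_assoc, ← Quaternion.coe_commutes, mul_assoc]
  constructor
  · simp only [lD]
    rw [k1, ki, kj, kk]
    have : c * fderiv ℝ (fun p => ((g p : ℝ) : ℍ[ℝ])) q 1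
        - c * fderiv ℝ (fun p => ((g p : ℝ) : ℍ[ℝ])) q qI * qRot μ qI
        - c * fderiv ℝ (fun p => ((g p : ℝ) : ℍ[ℝ])) q qJ * qRot μ qJ
        - c * fderiv ℝ (fun p => ((g p : ℝ) : ℍ[ℝ])) q qK * qRot μ qK
        = c * (fderiv ℝ (fun p => ((g p : ℝ) : ℍ[ℝ])) q 1
            + -(fderiv ℝ (fun p => ((g p : ℝ) : ℍ[ℝ])) q qI * qRot μ qI
              + fderiv ℝ (fun p => ((g p : ℝ) : ℍ[ℝ])) q qJ * qRot μ qJ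
              + fderiv ℝ (fun p => ((g p : ℝ) : ℍ[ℝ])) q qK * qRot μ qK)) := by
      noncomm_ring
    rw [this, factor]
    congr 1
    congr 1
    noncomm_ring
  · simp only [lDc]
    rw [k1, ki, kj, kk]
    have : c * fderiv ℝ (fun p => ((g p : ℝ) : ℍ[ℝ])) q 1
        + c * fderiv ℝ (fun p => ((g p : ℝ) : ℍ[ℝ])) q qI * qRot μ qI
        + c * fderiv ℝ (fun p => ((g p : ℝ) : ℍ[ℝ])) q qJ * qRot μ qJ
        + c * fderiv ℝ (fun p => ((g p : ℝ) : ℍ[ℝ])) q qK * qRot μ qK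
        = c * (fderiv ℝ (fun p => ((g p : ℝ) : ℍ[ℝ])) q 1
            + (fderiv ℝ (fun p => ((g p : ℝ) : ℍ[ℝ])) q qI * qRot μ qI
              + fderiv ℝ (fun p => ((g p : ℝ) : ℍ[ℝ])) q qJ * qRot μ qJ
              + fderiv ℝ (fun p => ((g p : ℝ) : ℍ[ℝ])) q qK * qRot μ qK)) := by
      noncomm_ring
    rw [this, factor]
    congr 1
    congr 1
    abel

end
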